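/- Let ζ ∈ ℓ²(W) be given by ζ(w) = q^{|w|/2} for a Coxeter group W whose growth series converges at q (i.e. W(q) = ∑_w q^{|w|} < ∞, q ≤ 1). Then for every generator s ∈ S, the right Hecke operator T_s^r satisfies T_s^r ζ = q^{1/2} ζ, where T_s^r acts on ℓ²(W) by T_s^r δ_w = δ_{ws} if |ws| > |w| and T_s^r δ_w = δ_{ws} + ((q−1)/√q) δ_w otherwise. -/

import Mathlib

/-- Let `ζ ∈ ℓ²(W)` be given by `ζ(w) = q^{|w|/2}` for a Coxeter group whose growth
series converges at `q` (`∑_w q^{|w|} < ∞`, `0 < q ≤ 1`). Then for every generator `s`,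
the right Hecke operator `T_s^r` (acting by `T_s^r δ_w = δ_{ws}` if `|ws| > |w|` and
`T_s^r δ_w = δ_{ws} + ((q−1)/√q) δ_w` otherwise) satisfies `T_s^r ζ = √q ζ`; pointwise,
`ζ(ws) + (if |ws| < |w| then ((q−1)/√q) ζ(w) else 0) = √q · ζ(w)` for every `w`. -/
theorem right_hecke_operator_eigenvector
    {B W : Type*} [Group W] (M : CoxeterMatrix B) (cs : CoxeterSystem M W)
    (q : ℝ) (hq0 : 0 < q) (hq1 : q ≤ 1)
    (hsum : Summable (fun w : W => q ^ cs.length w))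
    (ζ : W → ℝ) (hζ : ∀ w : W, ζ w = Real.sqrt q ^ cs.length w)
    (s : B) (w : W) :
    ζ (w * cs.simple s) +
      (if cs.length (w * cs.simple s) < cs.length w
        then ((q - 1) / Real.sqrt q) * ζ w else 0) = Real.sqrt q * ζ w := by
  have hs : Real.sqrt q > 0 := Real.sqrt_pos.2 hq0
  have hsq : Real.sqrt q * Real.sqrt q = q := Real.mul_self_sqrt hq0.le
  rw [hζ, hζ]
  rcases cs.length_mul_simple w s with h | h
  · rw [if_neg (by omega), h, add_zero, pow_succ, mul_comm]
  · rw [if_pos (by omega), ← h, pow_succ]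
    have h3 : Real.sqrt q ^ 3 = Real.sqrt q * q := by
      rw [pow_succ, pow_succ, pow_one, mul_assoc, hsq]
    field_simp
    ring_nf
    rw [Real.sq_sqrt hq0.le]
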